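/- Let H₁ = (V₁,E₁) be an undirected graph with terminals s and v and H₂ = (V₂,E₂) an undirected graph with terminals v and t, where V₁ ∩ V₂ = {v} and E₁ ∩ E₂ = ∅, and let G = (V₁ ∪ V₂, E₁ ∪ E₂) be their series composition. Let M ⊆ E₁ ∪ E₂ and k ≥ 0. Then S ⊆ E₁ ∪ E₂ is a feasible FTP solution for (G,s,t,M,k) if and only if S ∩ E₁ is a feasible FTP solution for (H₁,s,v,M∩E₁,k) and S ∩ E₂ is a feasible FTP solution for (H₂,v,t,M∩E₂,k). -/

import Mathlib

/-- `uReach S a b`: the undirected graph with edge set `S` contains an `a`-`b` path. -/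
def uReach {V : Type*} [DecidableEq V] (S : Finset (Sym2 V)) (a b : V) : Prop :=
  Relation.ReflTransGen (fun x y => Sym2.mk x y ∈ S) a b

/-- Feasibility for undirected Fault-Tolerant Path: for every `F ⊆ M` with `|F| ≤ k`,
the graph `(V, S \ F)` contains an `s`-`t` path. -/
def ftpuFeasible {V : Type*} [DecidableEq V] (S M : Finset (Sym2 V)) (s t : V) (k : ℕ) : Prop :=
  ∀ F ⊆ M, F.card ≤ k → uReach (S \ F) s t

lemma uReach_mono {V : Type*} [DecidableEq V] {W W' : Finset (Sym2 V)} (h : W ⊆ W')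
    {a b : V} (hr : uReach W a b) : uReach W' a b :=
  Relation.ReflTransGen.mono (fun _ _ hxy => h hxy) _ _ hr

lemma uReach_split {V : Type*} [DecidableEq V] (V₁ V₂ : Finset V) (E₁ E₂ : Finset (Sym2 V))
    (v : V) (hV : V₁ ∩ V₂ = {v})
    (hE₁ : ∀ e ∈ E₁, ∀ x ∈ e, x ∈ V₁)
    (hE₂ : ∀ e ∈ E₂, ∀ x ∈ e, x ∈ V₂)
    (W : Finset (Sym2 V)) (hW : W ⊆ E₁ ∪ E₂) {a b : V} (ha : a ∈ V₁)
    (h : uReach W a b) :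
    (b ∈ V₁ ∧ uReach (W ∩ E₁) a b) ∨
      (uReach (W ∩ E₁) a v ∧ b ∈ V₂ ∧ uReach (W ∩ E₂) v b) := by
  induction h with
  | refl => exact Or.inl ⟨ha, Relation.ReflTransGen.refl⟩
  | @tail c b hac hcb ih =>
    have hcb' := hW hcb
    rw [Finset.mem_union] at hcb'
    have hcv : ∀ x, x ∈ V₁ → x ∈ V₂ → x = v := by
      intro x h1 h2
      have : x ∈ V₁ ∩ V₂ := Finset.mem_inter.mpr ⟨h1, h2⟩
      rw [hV, Finset.mem_singleton] at this; exact this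
    rcases hcb' with h1 | h2
    · have hcV₁ : c ∈ V₁ := hE₁ _ h1 c (Sym2.mem_mk_left c b)
      have hbV₁ : b ∈ V₁ := hE₁ _ h1 b (Sym2.mem_mk_right c b)
      have hedge : Sym2.mk c b ∈ W ∩ E₁ := Finset.mem_inter.mpr ⟨hcb, h1⟩
      rcases ih with ⟨_, hp⟩ | ⟨hp, hcV₂, _⟩
      · exact Or.inl ⟨hbV₁, hp.tail hedge⟩
      · have : c = v := hcv c hcV₁ hcV₂
        subst this
        exact Or.inl ⟨hbV₁, hp.tail hedge⟩
    · have hcV₂ : c ∈ V₂ := hE₂ _ h2 c (Sym2.mem_mk_left c b)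
      have hbV₂ : b ∈ V₂ := hE₂ _ h2 b (Sym2.mem_mk_right c b)
      have hedge : Sym2.mk c b ∈ W ∩ E₂ := Finset.mem_inter.mpr ⟨hcb, h2⟩
      rcases ih with ⟨hcV₁, hp⟩ | ⟨hp, _, hp2⟩
      · have : c = v := hcv c hcV₁ hcV₂
        subst this
        exact Or.inr ⟨hp, hbV₂, Relation.ReflTransGen.single hedge⟩
      · exact Or.inr ⟨hp, hbV₂, hp2.tail hedge⟩

/-- Series composition: `H₁ = (V₁, E₁)` has terminals `s, v`, `H₂ = (V₂, E₂)` has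
terminals `v, t`, with `V₁ ∩ V₂ = {v}` and `E₁ ∩ E₂ = ∅`. Then `S ⊆ E₁ ∪ E₂` is
feasible for FTP on the composed graph `(G, s, t, M, k)` iff `S ∩ E₁` is feasible for
`(H₁, s, v, M ∩ E₁, k)` and `S ∩ E₂` is feasible for `(H₂, v, t, M ∩ E₂, k)`. -/
theorem stmt10 {V : Type*} [DecidableEq V] (V₁ V₂ : Finset V) (E₁ E₂ : Finset (Sym2 V))
    (s v t : V) (M S : Finset (Sym2 V)) (k : ℕ)
    (hV : V₁ ∩ V₂ = {v})
    (hE₁ : ∀ e ∈ E₁, ∀ x ∈ e, x ∈ V₁)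
    (hE₂ : ∀ e ∈ E₂, ∀ x ∈ e, x ∈ V₂)
    (hE : E₁ ∩ E₂ = ∅)
    (hs : s ∈ V₁) (ht : t ∈ V₂)
    (hM : M ⊆ E₁ ∪ E₂) (hS : S ⊆ E₁ ∪ E₂) :
    ftpuFeasible S M s t k ↔
      ftpuFeasible (S ∩ E₁) (M ∩ E₁) s v k ∧
      ftpuFeasible (S ∩ E₂) (M ∩ E₂) v t k := by
  have hcv : ∀ x, x ∈ V₁ → x ∈ V₂ → x = v := by
    intro x h1 h2
    have : x ∈ V₁ ∩ V₂ := Finset.mem_inter.mpr ⟨h1, h2⟩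
    rw [hV, Finset.mem_singleton] at this; exact this
  constructor
  · intro hfeas
    constructor
    · intro F hF hk
      have hp := hfeas F (hF.trans Finset.inter_subset_left) hk
      have hW : S \ F ⊆ E₁ ∪ E₂ := Finset.Subset.trans (Finset.sdiff_subset) hS
      have hEq : (S \ F) ∩ E₁ = (S ∩ E₁) \ F := by
        ext e; simp only [Finset.mem_sdiff, Finset.mem_inter]; tauto
      rcases uReach_split V₁ V₂ E₁ E₂ v hV hE₁ hE₂ _ hW hs hp with ⟨htV₁, hp1⟩ | ⟨hp1, _, _⟩
      · have : t = v := hcv t htV₁ ht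
        rw [← this, ← hEq]; exact hp1
      · rw [← hEq]; exact hp1
    · intro F hF hk
      have hp := hfeas F (hF.trans Finset.inter_subset_left) hk
      have hW : S \ F ⊆ E₁ ∪ E₂ := Finset.Subset.trans (Finset.sdiff_subset) hS
      have hEq : (S \ F) ∩ E₂ = (S ∩ E₂) \ F := by
        ext e; simp only [Finset.mem_sdiff, Finset.mem_inter]; tauto
      rcases uReach_split V₁ V₂ E₁ E₂ v hV hE₁ hE₂ _ hW hs hp with ⟨htV₁, _⟩ | ⟨_, _, hp2⟩
      · have : t = v := hcv t htV₁ ht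
        rw [← this]; exact Relation.ReflTransGen.refl
      · rw [← hEq]; exact hp2
  · rintro ⟨h1, h2⟩ F hF hk
    have p1 := h1 (F ∩ E₁) (Finset.inter_subset_inter hF (Finset.Subset.refl _))
      ((Finset.card_le_card Finset.inter_subset_left).trans hk)
    have p2 := h2 (F ∩ E₂) (Finset.inter_subset_inter hF (Finset.Subset.refl _))
      ((Finset.card_le_card Finset.inter_subset_left).trans hk)
    have sub1 : (S ∩ E₁) \ (F ∩ E₁) ⊆ S \ F := by
      intro e he
      simp only [Finset.mem_sdiff, Finset.mem_inter] at he ⊢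
      tauto
    have sub2 : (S ∩ E₂) \ (F ∩ E₂) ⊆ S \ F := by
      intro e he
      simp only [Finset.mem_sdiff, Finset.mem_inter] at he ⊢
      tauto
    exact (uReach_mono sub1 p1).trans (uReach_mono sub2 p2)
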